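/- Let $(x_n)_{n=0}^N$ be a real-valued martingale with square function $S_N(x)$, maximal difference $dx_N^*$, and stopping time $\mu = \inf\{n : S_n(x) \ge 1\}$. Then for every $\beta > 1$, $\mathbb P(S_N(x) \ge \beta) \le \frac{1}{\beta^2 - 1}\,\mathbb E\big[(x_N^2 + (dx_N^*)^2)\,\mathbf 1_{\{S_N(x) \ge 1\}}\big]$. -/

import Mathlib

open MeasureTheory Finset

/-- Good-λ type tail estimate for the square function of a discrete real martingale:
for `β > 1`, `P(S_N ≥ β) ≤ (β² - 1)⁻¹ E[(x_N² + (dx_N^*)²) 1_{S_N ≥ 1}]`. -/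
theorem square_function_good_lambda_tail
    {Ω : Type*} [m0 : MeasurableSpace Ω] {μ : Measure Ω} [IsProbabilityMeasure μ]
    (ℱ : Filtration ℕ m0) (x : ℕ → Ω → ℝ) (hx : Martingale x ℱ μ) (N : ℕ)
    (dx : ℕ → Ω → ℝ) (hdx0 : dx 0 = x 0)
    (hdx : ∀ k : ℕ, dx (k + 1) = x (k + 1) - x k)
    (S : ℕ → Ω → ℝ)
    (hS : ∀ n ω, S n ω = Real.sqrt (∑ k ∈ Finset.range (n + 1), dx k ω ^ 2))
    (hint : ∀ k, Integrable (fun ω => dx k ω ^ 2) μ)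
    (hxint : Integrable (fun ω => x N ω ^ 2) μ)
    (β : ℝ) (hβ : 1 < β) :
    (μ {ω | β ≤ S N ω}).toReal
      ≤ (β ^ 2 - 1)⁻¹
        * ∫ ω in {ω | 1 ≤ S N ω},
            (x N ω ^ 2
              + ((Finset.range (N + 1)).sup' (Finset.nonempty_range_add_one)
                  (fun n => |dx n ω|)) ^ 2) ∂μ := by
  classical
  -- notation
  set A : ℕ → Set Ω := fun n => {ω | 1 ≤ S n ω} with hA
  set M : Ω → ℝ := fun ω =>
    (Finset.range (N + 1)).sup' (Finset.nonempty_range_add_one) (fun n => |dx n ω|) with hM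
  set T : Ω → ℝ := fun ω =>
    ∑ k ∈ Finset.range N, Set.indicator (A k) (fun ω => dx (k + 1) ω ^ 2) ω with hT
  -- basic measurability
  have hdxm : ∀ k, StronglyMeasurable[ℱ k] (dx k) := by
    intro k
    cases k with
    | zero => rw [hdx0]; exact hx.stronglyAdapted 0
    | succ n =>
      rw [hdx n]
      exact (hx.stronglyAdapted (n + 1)).sub ((hx.stronglyAdapted n).mono (ℱ.mono (Nat.le_succ n)))
  have hdxm0 : ∀ k, StronglyMeasurable (dx k) := fun k => (hdxm k).mono (ℱ.le k)
  have hSm : ∀ n, StronglyMeasurable[ℱ n] (S n) := by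
    intro n
    have h1 : StronglyMeasurable[ℱ n] (fun ω => ∑ k ∈ Finset.range (n + 1), dx k ω ^ 2) := by
      apply Finset.stronglyMeasurable_fun_sum
      intro k hk
      exact ((hdxm k).mono (ℱ.mono (Nat.lt_succ_iff.mp (Finset.mem_range.mp hk)))).pow 2
    have : S n = fun ω => Real.sqrt (∑ k ∈ Finset.range (n + 1), dx k ω ^ 2) :=
      funext fun ω => hS n ω
    rw [this]
    exact (Real.continuous_sqrt.comp_stronglyMeasurable h1)
  have hAm : ∀ n, MeasurableSet[ℱ n] (A n) :=
    fun n => measurableSet_le measurable_const (hSm n).measurable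
  have hAm0 : ∀ n, MeasurableSet (A n) := fun n => ℱ.le n _ (hAm n)
  -- basic facts about S
  have hSnn : ∀ n ω, 0 ≤ S n ω := fun n ω => (hS n ω) ▸ Real.sqrt_nonneg _
  have hSsq : ∀ n ω, S n ω ^ 2 = ∑ k ∈ Finset.range (n + 1), dx k ω ^ 2 := by
    intro n ω
    rw [hS n ω, Real.sq_sqrt]
    exact Finset.sum_nonneg fun k _ => sq_nonneg _
  have hSmono : ∀ m n : ℕ, m ≤ n → ∀ ω, S m ω ≤ S n ω := by
    intro m n hmn ω
    rw [hS, hS]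
    apply Real.sqrt_le_sqrt
    apply Finset.sum_le_sum_of_subset_of_nonneg
    · exact Finset.range_subset_range.mpr (by omega)
    · intro k _ _; exact sq_nonneg _
  have hAmono : ∀ m n : ℕ, m ≤ n → A m ⊆ A n := by
    intro m n hmn ω hω
    exact le_trans hω (hSmono m n hmn ω)
  -- integrability of x k ^ 2 for all k
  have hxk2 : ∀ n, Integrable (fun ω => x n ω ^ 2) μ := by
    intro n
    have hxsum : ∀ ω, x n ω = ∑ k ∈ Finset.range (n + 1), dx k ω := by
      intro ω
      induction n with
      | zero => simp [← hdx0]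
      | succ m ih => rw [Finset.sum_range_succ, ← ih, hdx m, Pi.sub_apply]; ring
    have hg : Integrable (fun ω => ((n : ℝ) + 1) * ∑ k ∈ Finset.range (n + 1), dx k ω ^ 2) μ :=
      (integrable_finset_sum _ fun k _ => hint k).const_mul _
    have hsm : AEStronglyMeasurable (fun ω => x n ω ^ 2) μ :=
      ((((hx.stronglyAdapted n).mono (ℱ.le n)).measurable).pow_const 2).aestronglyMeasurable
    refine hg.mono' hsm (ae_of_all _ fun ω => ?_)
    rw [Real.norm_eq_abs, abs_of_nonneg (sq_nonneg _), hxsum ω]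
    have h := sq_sum_le_card_mul_sum_sq (s := Finset.range (n + 1)) (f := fun k => dx k ω)
    simpa using h
  have hxprod : ∀ k j, Integrable (fun ω => x k ω * x j ω) μ := by
    intro k j
    refine Integrable.mono' ((hxk2 k).add (hxk2 j))
      ((((hx.stronglyAdapted k).mono (ℱ.le k)).mul ((hx.stronglyAdapted j).mono (ℱ.le j))).aestronglyMeasurable)
      (ae_of_all _ fun ω => ?_)
    have h1 : |x k ω * x j ω| ≤ (x k ω ^ 2 + x j ω ^ 2) := by
      rw [abs_mul]
      nlinarith [sq_nonneg (|x k ω| - |x j ω|), sq_abs (x k ω), sq_abs (x j ω),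
        abs_nonneg (x k ω), abs_nonneg (x j ω)]
    exact h1
  -- key martingale identity
  have hkey : ∀ k, ∫ ω in A k, x k ω * x (k + 1) ω ∂μ = ∫ ω in A k, x k ω ^ 2 ∂μ := by
    intro k
    set f : Ω → ℝ := (A k).indicator (x k) with hf
    have hfsm : StronglyMeasurable[ℱ k] f := (hx.stronglyAdapted k).indicator (hAm k)
    have hfg : Integrable (f * x (k + 1)) μ := by
      refine Integrable.mono' ((hxprod k (k + 1)).abs)
        (((hfsm.mono (ℱ.le k)).mul ((hx.stronglyAdapted (k + 1)).mono (ℱ.le (k + 1)))).aestronglyMeasurable)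
        (ae_of_all _ fun ω => ?_)
      simp only [Pi.mul_apply, hf, Real.norm_eq_abs]
      by_cases hω : ω ∈ A k
      · rw [Set.indicator_of_mem hω]
      · rw [Set.indicator_of_notMem hω, zero_mul, abs_zero]; exact abs_nonneg _
    have hff : Integrable (f * x k) μ := by
      refine Integrable.mono' ((hxprod k k).abs)
        (((hfsm.mono (ℱ.le k)).mul ((hx.stronglyAdapted k).mono (ℱ.le k))).aestronglyMeasurable)
        (ae_of_all _ fun ω => ?_)
      simp only [Pi.mul_apply, hf, Real.norm_eq_abs]
      by_cases hω : ω ∈ A k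
      · rw [Set.indicator_of_mem hω]
      · rw [Set.indicator_of_notMem hω, zero_mul, abs_zero]; exact abs_nonneg _
    have h1 : ∫ ω, (f * x (k + 1)) ω ∂μ = ∫ ω, (f * x k) ω ∂μ := by
      calc ∫ ω, (f * x (k + 1)) ω ∂μ
          = ∫ ω, (μ[f * x (k + 1)|ℱ k]) ω ∂μ := (integral_condExp (ℱ.le k)).symm
        _ = ∫ ω, (f * x k) ω ∂μ := by
            refine integral_congr_ae ?_
            refine ((condExp_mul_of_stronglyMeasurable_left hfsm hfg (hx.integrable (k + 1))).trans ?_)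
            filter_upwards [hx.condExp_ae_eq (Nat.le_succ k)] with ω hω
            simp only [Pi.mul_apply, hω]
    rw [← integral_indicator (hAm0 k), ← integral_indicator (hAm0 k)]
    calc ∫ ω, Set.indicator (A k) (fun ω => x k ω * x (k + 1) ω) ω ∂μ
        = ∫ ω, (f * x (k + 1)) ω ∂μ := by
          refine integral_congr_ae (ae_of_all _ fun ω => ?_)
          simp only [Pi.mul_apply, hf]
          by_cases hω : ω ∈ A k
          · rw [Set.indicator_of_mem hω, Set.indicator_of_mem hω]
          · rw [Set.indicator_of_notMem hω, Set.indicator_of_notMem hω, zero_mul]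
      _ = ∫ ω, (f * x k) ω ∂μ := h1
      _ = ∫ ω, Set.indicator (A k) (fun ω => x k ω ^ 2) ω ∂μ := by
          refine integral_congr_ae (ae_of_all _ fun ω => ?_)
          simp only [Pi.mul_apply, hf]
          by_cases hω : ω ∈ A k
          · rw [Set.indicator_of_mem hω, Set.indicator_of_mem hω, sq]
          · rw [Set.indicator_of_notMem hω, Set.indicator_of_notMem hω, zero_mul]
  -- Step C: E[dx_{k+1}^2 ; A k] = E[x_{k+1}^2 ; A k] - E[x_k^2 ; A k]
  have hC : ∀ k, ∫ ω in A k, dx (k + 1) ω ^ 2 ∂μ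
      = ∫ ω in A k, x (k + 1) ω ^ 2 ∂μ - ∫ ω in A k, x k ω ^ 2 ∂μ := by
    intro k
    have hIa : IntegrableOn (fun ω => x (k + 1) ω ^ 2) (A k) μ := (hxk2 (k + 1)).integrableOn
    have hIb : IntegrableOn (fun ω => x k ω ^ 2) (A k) μ := (hxk2 k).integrableOn
    have hIc : IntegrableOn (fun ω => x k ω * x (k + 1) ω) (A k) μ :=
      (hxprod k (k + 1)).integrableOn
    have e1 : ∫ ω in A k, dx (k + 1) ω ^ 2 ∂μ
        = ∫ ω in A k, (x (k + 1) ω ^ 2 - x k ω ^ 2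
            - 2 * (x k ω * x (k + 1) ω - x k ω ^ 2)) ∂μ := by
      refine setIntegral_congr_fun (hAm0 k) (fun ω _ => ?_)
      rw [hdx k, Pi.sub_apply]; ring
    have hIab : Integrable (fun ω => x (k + 1) ω ^ 2 - x k ω ^ 2) (μ.restrict (A k)) :=
      hIa.sub hIb
    have hIcb0 : Integrable (fun ω => x k ω * x (k + 1) ω - x k ω ^ 2) (μ.restrict (A k)) :=
      hIc.sub hIb
    have hIcb : Integrable (fun ω => 2 * (x k ω * x (k + 1) ω - x k ω ^ 2)) (μ.restrict (A k)) :=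
      hIcb0.const_mul 2
    rw [e1, integral_sub hIab hIcb, integral_sub hIa hIb,
      integral_const_mul, integral_sub hIc hIb, hkey k, sub_self, mul_zero, sub_zero]
  -- pointwise claim
  have hpoint : ∀ ω ∈ A N, S N ω ^ 2 - 1 ≤ T ω + M ω ^ 2 := by
    intro ω hω
    have hex : ∃ n, 1 ≤ S n ω := ⟨N, hω⟩
    set j := Nat.find hex with hjdef
    have hj : 1 ≤ S j ω := Nat.find_spec hex
    have hjN : j ≤ N := Nat.find_le hω
    -- dx j ^ 2 ≤ M ^ 2
    have hMj : dx j ω ^ 2 ≤ M ω ^ 2 := by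
      have h1 : |dx j ω| ≤ M ω :=
        Finset.le_sup' (fun n => |dx n ω|) (Finset.mem_range.mpr (Nat.lt_succ_of_le hjN))
      calc dx j ω ^ 2 = |dx j ω| ^ 2 := (sq_abs _).symm
        _ ≤ M ω ^ 2 := pow_le_pow_left₀ (abs_nonneg _) h1 2
    -- S j ^ 2 ≤ 1 + dx j ^ 2
    have hSj : S j ω ^ 2 ≤ 1 + dx j ω ^ 2 := by
      rcases Nat.eq_zero_or_pos j with hj0 | hj0
      · rw [hj0, hSsq, Finset.sum_range_one]
        linarith [sq_nonneg (dx 0 ω)]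
      · obtain ⟨i, hi⟩ : ∃ i, j = i + 1 := ⟨j - 1, by omega⟩
        have hmin : ¬ 1 ≤ S i ω := Nat.find_min hex (by omega)
        have hS1 : S i ω < 1 := lt_of_not_ge hmin
        have hi2 : S i ω ^ 2 ≤ 1 := by nlinarith [hSnn i ω]
        have hdec2 : S j ω ^ 2 = S i ω ^ 2 + dx j ω ^ 2 := by
          rw [hi, hSsq, hSsq, Finset.sum_range_succ]
        linarith
    -- tail bound
    have htail : ∑ k ∈ Finset.Ico (j + 1) (N + 1), dx k ω ^ 2 ≤ T ω := by
      have e2 : ∑ k ∈ Finset.Ico (j + 1) (N + 1), dx k ω ^ 2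
          = ∑ i ∈ Finset.Ico j N, dx (i + 1) ω ^ 2 := by
        rw [← Finset.map_add_right_Ico j N 1, Finset.sum_map]
        simp
      rw [e2]
      have e3 : ∑ i ∈ Finset.Ico j N, dx (i + 1) ω ^ 2
          = ∑ i ∈ Finset.Ico j N, Set.indicator (A i) (fun ω => dx (i + 1) ω ^ 2) ω := by
        refine Finset.sum_congr rfl (fun i hi => ?_)
        have hiA : ω ∈ A i := le_trans hj (hSmono j i (Finset.mem_Ico.mp hi).1 ω)
        rw [Set.indicator_of_mem hiA]
      rw [e3, hT]
      refine Finset.sum_le_sum_of_subset_of_nonneg ?_ ?_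
      · intro i hi
        exact Finset.mem_range.mpr (Finset.mem_Ico.mp hi).2
      · intro i _ _
        exact Set.indicator_nonneg (fun ω _ => sq_nonneg _) ω
    -- combine
    have hdecomp : S N ω ^ 2 = S j ω ^ 2 + ∑ k ∈ Finset.Ico (j + 1) (N + 1), dx k ω ^ 2 := by
      rw [hSsq, hSsq, Finset.range_eq_Ico, Finset.range_eq_Ico]
      exact (Finset.sum_Ico_consecutive _ (by omega : 0 ≤ j + 1)
        (by omega : j + 1 ≤ N + 1)).symm
    linarith
  -- integrability of S N ^ 2 - 1, T, M ^ 2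
  have hS2int : Integrable (fun ω => S N ω ^ 2 - 1) μ := by
    have e : (fun ω => S N ω ^ 2 - 1)
        = fun ω => (∑ k ∈ Finset.range (N + 1), dx k ω ^ 2) - 1 :=
      funext fun ω => by rw [hSsq]
    rw [e]
    exact (integrable_finset_sum _ fun k _ => hint k).sub (integrable_const 1)
  have hTint : Integrable T μ := by
    rw [hT]
    exact integrable_finset_sum _ fun k _ => (hint (k + 1)).indicator (hAm0 k)
  have hMm : Measurable M := by
    have h := Finset.measurable_range_sup' (f := fun n ω => |dx n ω|) (n := N)
      (fun k _ => (hdxm0 k).measurable.abs)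
    have e : M = (Finset.range (N + 1)).sup' Finset.nonempty_range_add_one (fun n ω => |dx n ω|) := by
      funext ω
      rw [hM, Finset.sup'_apply]
    rw [e]
    exact h
  have hM2int : Integrable (fun ω => M ω ^ 2) μ := by
    have hg2 : Integrable (fun ω => ∑ k ∈ Finset.range (N + 1), dx k ω ^ 2) μ :=
      integrable_finset_sum _ fun k _ => hint k
    refine hg2.mono' ((hMm.pow_const 2).aestronglyMeasurable) (ae_of_all _ fun ω => ?_)
    rw [Real.norm_eq_abs, abs_of_nonneg (sq_nonneg _)]
    obtain ⟨i, hi, hie⟩ := Finset.exists_mem_eq_sup' (s := Finset.range (N + 1))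
      Finset.nonempty_range_add_one (fun n => |dx n ω|)
    have : M ω ^ 2 = dx i ω ^ 2 := by simp only [hM]; rw [hie, sq_abs]
    rw [this]
    exact Finset.single_le_sum (fun k _ => sq_nonneg (dx k ω)) hi
  -- telescoping sum
  have htel : ∀ n, ∑ k ∈ Finset.range n,
      (∫ ω in A k, x (k + 1) ω ^ 2 ∂μ - ∫ ω in A k, x k ω ^ 2 ∂μ)
        ≤ ∫ ω in A n, x n ω ^ 2 ∂μ := by
    intro n
    induction n with
    | zero =>
      simp only [Finset.range_zero, Finset.sum_empty]
      exact setIntegral_nonneg (hAm0 0) (fun ω _ => sq_nonneg _)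
    | succ m ih =>
      rw [Finset.sum_range_succ]
      have h1 : ∫ ω in A m, x (m + 1) ω ^ 2 ∂μ ≤ ∫ ω in A (m + 1), x (m + 1) ω ^ 2 ∂μ := by
        refine setIntegral_mono_set (hxk2 (m + 1)).integrableOn
          (ae_of_all _ fun ω => sq_nonneg _)
          (HasSubset.Subset.eventuallyLE (hAmono m (m + 1) (Nat.le_succ m)))
      linarith
  -- main chain
  have hpos : (0 : ℝ) < β ^ 2 - 1 := by nlinarith
  rw [inv_mul_eq_div, le_div_iff₀ hpos]
  set B : Set Ω := {ω | β ≤ S N ω} with hB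
  have hBm : MeasurableSet B :=
    measurableSet_le measurable_const ((hSm N).mono (ℱ.le N)).measurable
  have hBA : B ⊆ A N := fun ω h => le_trans hβ.le h
  calc (μ B).toReal * (β ^ 2 - 1)
      = ∫ _ in B, (β ^ 2 - 1) ∂μ := by rw [setIntegral_const, smul_eq_mul, measureReal_def]
    _ ≤ ∫ ω in B, (S N ω ^ 2 - 1) ∂μ := by
        refine setIntegral_mono_on (integrableOn_const (measure_ne_top μ B))
          hS2int.integrableOn hBm (fun ω hω => ?_)
        have : β ≤ S N ω := hω
        nlinarith [hSnn N ω]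
    _ ≤ ∫ ω in A N, (S N ω ^ 2 - 1) ∂μ := by
        refine setIntegral_mono_set hS2int.integrableOn ?_
          (HasSubset.Subset.eventuallyLE hBA)
        refine (ae_restrict_iff' (hAm0 N)).mpr (ae_of_all _ fun ω hω => ?_)
        have h1 : (1 : ℝ) ≤ S N ω := hω
        simp only [Pi.zero_apply]
        nlinarith
    _ ≤ ∫ ω in A N, (T ω + M ω ^ 2) ∂μ := by
        exact setIntegral_mono_on hS2int.integrableOn
          (hTint.add hM2int).integrableOn (hAm0 N) hpoint
    _ = ∫ ω in A N, T ω ∂μ + ∫ ω in A N, M ω ^ 2 ∂μ :=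
        integral_add hTint.integrableOn hM2int.integrableOn
    _ ≤ ∫ ω, T ω ∂μ + ∫ ω in A N, M ω ^ 2 ∂μ := by
        have := setIntegral_le_integral (s := A N) hTint
          (ae_of_all _ fun ω => Finset.sum_nonneg
            (fun k _ => Set.indicator_nonneg (fun ω _ => sq_nonneg _) ω))
        linarith
    _ = ∑ k ∈ Finset.range N,
          (∫ ω in A k, x (k + 1) ω ^ 2 ∂μ - ∫ ω in A k, x k ω ^ 2 ∂μ)
        + ∫ ω in A N, M ω ^ 2 ∂μ := by
        have e1 : ∫ ω, T ω ∂μ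
            = ∑ k ∈ Finset.range N, ∫ ω in A k, dx (k + 1) ω ^ 2 ∂μ := by
          rw [hT, integral_finset_sum _ (fun k _ => (hint (k + 1)).indicator (hAm0 k))]
          exact Finset.sum_congr rfl fun k _ => integral_indicator (hAm0 k)
        rw [e1]
        congr 1
        exact Finset.sum_congr rfl fun k _ => hC k
    _ ≤ ∫ ω in A N, x N ω ^ 2 ∂μ + ∫ ω in A N, M ω ^ 2 ∂μ := by
        have := htel N
        linarith
    _ = ∫ ω in A N, (x N ω ^ 2 + M ω ^ 2) ∂μ :=
        (integral_add hxint.integrableOn hM2int.integrableOn).symm
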